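/- Let n ≥ 1, let 0 < r₂ ≤ r₁, let x ∈ ℝⁿ, and let f be a twice continuously differentiable convex function on B_∞(x, r₁+r₂) with ‖∇f(z)‖_∞ ≤ L for all z ∈ B_∞(x, r₁+r₂). Then E_{y} E_{z} Δf(z) ≤ nL/r₁, where y is uniformly distributed on B_∞(x, r₁), z is (conditionally on y) uniformly distributed on B_∞(y, r₂), and Δf = Σᵢ ∂²f/∂xᵢ² is the Laplacian of f. -/

import Mathlib

open MeasureTheory

/-- The closed `ℓ∞`-ball of radius `r` around `x` in `ℝⁿ`. -/
def Binf {n : ℕ} (x : EuclideanSpace ℝ (Fin n)) (r : ℝ) : Set (EuclideanSpace ℝ (Fin n)) :=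
  {z | ∀ i, |z i - x i| ≤ r}

/-- The Laplacian `Δf(z) = ∑ i, ∂²f/∂xᵢ²(z)`. -/
noncomputable def laplacian {n : ℕ} (f : EuclideanSpace ℝ (Fin n) → ℝ)
    (z : EuclideanSpace ℝ (Fin n)) : ℝ :=
  ∑ i, fderiv ℝ (fun w => fderiv ℝ f w (EuclideanSpace.single i 1)) z (EuclideanSpace.single i 1)

section Aux

variable {n : ℕ} (x : EuclideanSpace ℝ (Fin n)) (R : ℝ)

lemma Binf_strict_subset_interior :
    {z : EuclideanSpace ℝ (Fin n) | ∀ i, |z i - x i| < R} ⊆ interior (Binf x R) := by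
  apply interior_maximal
  · intro z hz i; exact (hz i).le
  · have h : {z : EuclideanSpace ℝ (Fin n) | ∀ i, |z i - x i| < R}
        = ⋂ i, {z : EuclideanSpace ℝ (Fin n) | |z i - x i| < R} := by
      ext z; simp
    rw [h]
    refine isOpen_iInter_of_finite fun i => ?_
    have hc : Continuous fun z : EuclideanSpace ℝ (Fin n) => |z i - x i| :=
      continuous_abs.comp ((EuclideanSpace.proj (𝕜 := ℝ) i).continuous.sub continuous_const)
    exact isOpen_lt hc continuous_const

lemma Binf_eq_preimage :
    Binf x R = (EuclideanSpace.equiv (Fin n) ℝ) ⁻¹'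
      (Set.Icc (fun i => x i - R) (fun i => x i + R)) := by
  ext z
  simp only [Binf, Set.mem_setOf_eq, Set.mem_preimage, Set.mem_Icc, Pi.le_def]
  constructor
  · intro h
    constructor <;> intro i <;> have := abs_le.1 (h i)
    · show x i - R ≤ z i; linarith [this.1]
    · show z i ≤ x i + R; linarith [this.2]
  · intro ⟨h1, h2⟩ i
    have g1 : x i - R ≤ z i := h1 i
    have g2 : z i ≤ x i + R := h2 i
    rw [abs_le]; constructor <;> linarith

lemma Binf_isCompact : IsCompact (Binf x R) := by
  rw [Binf_eq_preimage]
  exact (EuclideanSpace.equiv (Fin n) ℝ).toHomeomorph.isCompact_preimage.2 isCompact_Icc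

lemma Binf_convex : Convex ℝ (Binf x R) := by
  intro z hz w hw s t hs ht hst
  intro i
  have happ : (s • z + t • w) i - x i = s * (z i - x i) + t * (w i - x i) := by
    have : (s • z + t • w) i = s * z i + t * w i := rfl
    rw [this]; linear_combination (x i) * hst
  rw [happ]
  calc |s * (z i - x i) + t * (w i - x i)| ≤ s * |z i - x i| + t * |w i - x i| := by
        refine (abs_add_le _ _).trans ?_
        rw [abs_mul, abs_mul, abs_of_nonneg hs, abs_of_nonneg ht]
    _ ≤ s * R + t * R := by
        have := hz i; have := hw i
        gcongr
    _ = R := by linear_combination R * hst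

end Aux

set_option maxHeartbeats 2000000 in
/-- For a twice continuously differentiable convex function `f` on
`B_∞(x, r₁ + r₂)` whose gradient is bounded by `L` in `ℓ∞`-norm, the expectation of the
Laplacian `Δf(z)`, over `y` uniform in `B_∞(x, r₁)` and `z` uniform in `B_∞(y, r₂)`,
is at most `n L / r₁`. -/
theorem stmt1 {n : ℕ} (hn : 1 ≤ n) (r₁ r₂ L : ℝ) (hr₂ : 0 < r₂) (hr₁₂ : r₂ ≤ r₁)
    (x : EuclideanSpace ℝ (Fin n)) (f : EuclideanSpace ℝ (Fin n) → ℝ)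
    (hf : ContDiffOn ℝ 2 f (Binf x (r₁ + r₂)))
    (hconv : ConvexOn ℝ (Binf x (r₁ + r₂)) f)
    (hL : ∀ z ∈ Binf x (r₁ + r₂), ∀ i, |gradient f z i| ≤ L) :
    ((2 * r₁) ^ n)⁻¹ *
        ∫ y in Binf x r₁, (((2 * r₂) ^ n)⁻¹ * ∫ z in Binf y r₂, laplacian f z)
      ≤ n * L / r₁ := by
  classical
  have hr₁ : 0 < r₁ := lt_of_lt_of_le hr₂ hr₁₂
  have hR0 : 0 < r₁ + r₂ := by linarith
  set S : Set (EuclideanSpace ℝ (Fin n)) := Binf x (r₁ + r₂) with hSdef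
  have hi0 : Nonempty (Fin n) := ⟨⟨0, hn⟩⟩
  have hxS : x ∈ S := by intro i; simp [hR0.le]
  have hL0 : 0 ≤ L := le_trans (abs_nonneg _) (hL x hxS hi0.some)
  have hUD : UniqueDiffOn ℝ S := by
    refine uniqueDiffOn_convex (Binf_convex x (r₁ + r₂)) ⟨x, ?_⟩
    exact Binf_strict_subset_interior x (r₁ + r₂) (fun i => by simpa using hR0)
  have hScomp : IsCompact S := Binf_isCompact x (r₁ + r₂)
  -- index bookkeeping
  set N : ℕ := n + n - 1 with hNdef
  have hN : n + n = N + 1 := by omega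
  set ee : Fin n ⊕ Fin n ≃ Fin (N + 1) := finSumFinEquiv.trans (finCongr hN) with heedef
  set a : Fin (N + 1) → ℝ :=
    fun j => Sum.elim (fun i => x i - r₁) (fun _ => -r₂) (ee.symm j) with hadef
  set b : Fin (N + 1) → ℝ :=
    fun j => Sum.elim (fun i => x i + r₁) (fun _ => r₂) (ee.symm j) with hbdef
  have hab : a ≤ b := by
    intro j
    rcases h : ee.symm j with k | k <;> simp [hadef, hbdef, h] <;> linarith
  have ha_inl : ∀ k, a (ee (Sum.inl k)) = x k - r₁ := by
    intro k; simp [hadef]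
  have hb_inl : ∀ k, b (ee (Sum.inl k)) = x k + r₁ := by
    intro k; simp [hbdef]
  have ha_inr : ∀ k, a (ee (Sum.inr k)) = -r₂ := by
    intro k; simp [hadef]
  have hb_inr : ∀ k, b (ee (Sum.inr k)) = r₂ := by
    intro k; simp [hbdef]
  -- the linear map (y, u) ↦ y + u
  set ψe : (Fin n → ℝ) ≃L[ℝ] EuclideanSpace ℝ (Fin n) := (EuclideanSpace.equiv (Fin n) ℝ).symm
    with hψedef
  set φL : (Fin (N + 1) → ℝ) →L[ℝ] EuclideanSpace ℝ (Fin n) :=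
    (ψe.toContinuousLinearMap).comp
      (ContinuousLinearMap.pi fun i =>
        (ContinuousLinearMap.proj (R := ℝ) (φ := fun _ : Fin (N + 1) => ℝ) (ee (Sum.inl i)) +
          ContinuousLinearMap.proj (R := ℝ) (φ := fun _ : Fin (N + 1) => ℝ) (ee (Sum.inr i))))
    with hφLdef
  have hφL : ∀ w i, φL w i = w (ee (Sum.inl i)) + w (ee (Sum.inr i)) := fun w i => rfl
  -- membership lemmas
  have hsum_cases : ∀ (i₀ : Fin (N + 1)) (w : Fin (N + 1) → ℝ),
      (∀ j, w j ∈ Set.Icc (a j) (b j)) → (∀ j, j ≠ i₀ → w j ∈ Set.Ioo (a j) (b j)) →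
      ∀ t, |φL w t - x t| < r₁ + r₂ := by
    intro i₀ w hw hsw t
    have hne : ee (Sum.inl t) ≠ ee (Sum.inr t) := ee.injective.ne (by simp)
    have hIcc1 := hw (ee (Sum.inl t)); have hIcc2 := hw (ee (Sum.inr t))
    rw [Set.mem_Icc, ha_inl, hb_inl] at hIcc1
    rw [Set.mem_Icc, ha_inr, hb_inr] at hIcc2
    have hor : ee (Sum.inl t) ≠ i₀ ∨ ee (Sum.inr t) ≠ i₀ := by
      by_contra h
      push_neg at h
      exact hne (h.1.trans h.2.symm)
    rw [hφL w t]
    rcases hor with h | h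
    · have hst := hsw _ h; rw [Set.mem_Ioo, ha_inl, hb_inl] at hst
      rw [abs_lt]
      obtain ⟨h1, h2⟩ := hst; obtain ⟨h3, h4⟩ := hIcc2
      constructor <;> linarith
    · have hst := hsw _ h; rw [Set.mem_Ioo, ha_inr, hb_inr] at hst
      rw [abs_lt]
      obtain ⟨h1, h2⟩ := hst; obtain ⟨h3, h4⟩ := hIcc1
      constructor <;> linarith
  have hmapIcc : ∀ w ∈ Set.Icc a b, φL w ∈ S := by
    intro w hw
    rw [Set.mem_Icc] at hw
    intro t
    have h1 := hw.1 (ee (Sum.inl t)); have h2 := hw.2 (ee (Sum.inl t))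
    have h3 := hw.1 (ee (Sum.inr t)); have h4 := hw.2 (ee (Sum.inr t))
    rw [ha_inl] at h1; rw [hb_inl] at h2; rw [ha_inr] at h3; rw [hb_inr] at h4
    rw [hφL w t, abs_le]
    constructor <;> linarith
  have hmapInt : ∀ (i₀ : Fin (N + 1)) (w : Fin (N + 1) → ℝ),
      (∀ j, w j ∈ Set.Icc (a j) (b j)) → (∀ j, j ≠ i₀ → w j ∈ Set.Ioo (a j) (b j)) →
      φL w ∈ interior S :=
    fun i₀ w h1 h2 => Binf_strict_subset_interior x (r₁ + r₂) (hsum_cases i₀ w h1 h2)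
  -- the measurable equivalence ℝ^{2n} ≃ ℝⁿ × ℝⁿ
  set Tm : (Fin (N + 1) → ℝ) ≃ᵐ (EuclideanSpace ℝ (Fin n) × EuclideanSpace ℝ (Fin n)) :=
    (MeasurableEquiv.piCongrLeft (fun _ : Fin (N + 1) => ℝ) ee).symm.trans
      ((MeasurableEquiv.sumPiEquivProdPi (fun _ => ℝ)).trans
        (MeasurableEquiv.prodCongr (MeasurableEquiv.toLp 2 (Fin n → ℝ))
          (MeasurableEquiv.toLp 2 (Fin n → ℝ)))) with hTmdef
  have hTm : MeasurePreserving Tm volume volume := by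
    have h1 : MeasurePreserving (MeasurableEquiv.piCongrLeft (fun _ : Fin (N + 1) => ℝ) ee).symm
        volume volume :=
      (volume_measurePreserving_piCongrLeft (fun _ : Fin (N + 1) => ℝ) ee).symm _
    have h2 := volume_measurePreserving_sumPiEquivProdPi (fun _ : Fin n ⊕ Fin n => ℝ)
    have h3 : MeasurePreserving
        (MeasurableEquiv.prodCongr (MeasurableEquiv.toLp 2 (Fin n → ℝ))
          (MeasurableEquiv.toLp 2 (Fin n → ℝ))) volume volume :=
      ((EuclideanSpace.volume_preserving_symm_measurableEquiv_toLp (Fin n)).symm _).prod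
        ((EuclideanSpace.volume_preserving_symm_measurableEquiv_toLp (Fin n)).symm _)
    exact h3.comp (h2.comp h1)
  have hT1 : ∀ w i, (Tm w).1 i = w (ee (Sum.inl i)) := fun w i => rfl
  have hT2 : ∀ w i, (Tm w).2 i = w (ee (Sum.inr i)) := fun w i => rfl
  have hTφ : ∀ w, (Tm w).1 + (Tm w).2 = φL w := fun w => rfl
  have hpre : Tm ⁻¹' ((Binf x r₁) ×ˢ (Binf (0 : EuclideanSpace ℝ (Fin n)) r₂)) = Set.Icc a b := by
    ext w
    constructor
    · rintro ⟨h1, h2⟩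
      rw [Set.mem_Icc]
      constructor <;> intro j <;> rcases hj : ee.symm j with k | k
      · have hk : ee (Sum.inl k) = j := by rw [← hj]; simp
        have h' := abs_le.1 (h1 k); rw [hT1, hk] at h'
        simp only [hadef, hj, Sum.elim_inl]; linarith [h'.1]
      · have hk : ee (Sum.inr k) = j := by rw [← hj]; simp
        have h' := abs_le.1 (h2 k); rw [hT2, hk] at h'
        have h0 : (0 : EuclideanSpace ℝ (Fin n)) k = 0 := rfl
        rw [h0, sub_zero] at h'
        simp only [hadef, hj, Sum.elim_inr]; linarith [h'.1]
      · have hk : ee (Sum.inl k) = j := by rw [← hj]; simp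
        have h' := abs_le.1 (h1 k); rw [hT1, hk] at h'
        simp only [hbdef, hj, Sum.elim_inl]; linarith [h'.2]
      · have hk : ee (Sum.inr k) = j := by rw [← hj]; simp
        have h' := abs_le.1 (h2 k); rw [hT2, hk] at h'
        have h0 : (0 : EuclideanSpace ℝ (Fin n)) k = 0 := rfl
        rw [h0, sub_zero] at h'
        simp only [hbdef, hj, Sum.elim_inr]; linarith [h'.2]
    · intro hw
      rw [Set.mem_Icc] at hw
      constructor
      · intro i
        have h1 := hw.1 (ee (Sum.inl i)); have h2 := hw.2 (ee (Sum.inl i))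
        rw [ha_inl] at h1; rw [hb_inl] at h2
        rw [hT1 w i, abs_le]
        constructor <;> linarith
      · intro i
        have h1 := hw.1 (ee (Sum.inr i)); have h2 := hw.2 (ee (Sum.inr i))
        rw [ha_inr] at h1; rw [hb_inr] at h2
        have h0 : (0 : EuclideanSpace ℝ (Fin n)) i = 0 := rfl
        rw [hT2 w i, h0, sub_zero, abs_le]
        constructor <;> linarith
  -- translation invariance for the inner integral
  have htrans : ∀ y : EuclideanSpace ℝ (Fin n), (∫ z in Binf y r₂, laplacian f z)
      = ∫ u in Binf (0 : EuclideanSpace ℝ (Fin n)) r₂, laplacian f (y + u) := by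
    intro y
    have hmp : MeasurePreserving (fun u : EuclideanSpace ℝ (Fin n) => y + u) volume volume :=
      measurePreserving_add_left volume y
    have hemb : MeasurableEmbedding (fun u : EuclideanSpace ℝ (Fin n) => y + u) :=
      (MeasurableEquiv.addLeft y).measurableEmbedding
    have hpre' : (fun u : EuclideanSpace ℝ (Fin n) => y + u) ⁻¹' (Binf y r₂)
        = Binf (0 : EuclideanSpace ℝ (Fin n)) r₂ := by
      ext u
      show (∀ i, |(y + u) i - y i| ≤ r₂) ↔ (∀ i, |u i - (0 : EuclideanSpace ℝ (Fin n)) i| ≤ r₂)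
      have he : ∀ i, (y + u) i - y i = u i - (0 : EuclideanSpace ℝ (Fin n)) i := by
        intro i; show y i + u i - y i = u i - 0; ring
      exact forall_congr' fun i => by rw [he i]
    rw [← hpre', hmp.setIntegral_preimage_emb hemb]
  -- within-set gradient and its continuity
  set gradW : Fin n → EuclideanSpace ℝ (Fin n) → ℝ :=
    fun k z => fderivWithin ℝ f S z (EuclideanSpace.single k 1) with hgradWdef
  have hfd1 : ContDiffOn ℝ 1 (fderivWithin ℝ f S) S := hf.fderivWithin hUD (by norm_num)
  have hgradWcont : ∀ k, ContinuousOn (gradW k) S := fun k =>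
    (hfd1.continuousOn).clm_apply continuousOn_const
  have hgrad_int : ∀ (k : Fin n) (z : EuclideanSpace ℝ (Fin n)), z ∈ interior S →
      gradW k z = fderiv ℝ f z (EuclideanSpace.single k 1) := by
    intro k z hz
    show fderivWithin ℝ f S z (EuclideanSpace.single k 1) = _
    rw [fderivWithin_of_mem_nhds (mem_interior_iff_mem_nhds.1 hz)]
  have hgradW_bound : ∀ (k : Fin n) (z : EuclideanSpace ℝ (Fin n)), z ∈ interior S →
      |gradW k z| ≤ L := by
    intro k z hz
    rw [hgrad_int k z hz]
    have hgrad : fderiv ℝ f z (EuclideanSpace.single k 1) = gradient f z k := by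
      have h1 : (inner ℝ (gradient f z) (EuclideanSpace.single k 1) : ℝ)
          = fderiv ℝ f z (EuclideanSpace.single k 1) := by
        simp only [gradient]
        exact InnerProductSpace.toDual_symm_apply
      have h2 : (inner ℝ (gradient f z) (EuclideanSpace.single k 1) : ℝ) = gradient f z k := by
        rw [EuclideanSpace.inner_single_right]; simp
      rw [← h1, h2]
    rw [hgrad]
    exact hL z (interior_subset hz) k
  -- the vector field and its derivative
  set V : (Fin (N + 1) → ℝ) → Fin (N + 1) → ℝ :=
    fun w j => Sum.elim (fun k => gradW k (φL w)) (fun _ => (0 : ℝ)) (ee.symm j) with hVdef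
  set F' : (Fin (N + 1) → ℝ) → (Fin (N + 1) → ℝ) →L[ℝ] Fin (N + 1) → ℝ :=
    fun w => ContinuousLinearMap.pi fun j =>
      Sum.elim
        (fun k => (fderiv ℝ (fun z => fderiv ℝ f z (EuclideanSpace.single k 1)) (φL w)).comp φL)
        (fun _ => (0 : (Fin (N + 1) → ℝ) →L[ℝ] ℝ)) (ee.symm j) with hF'def
  have hdiv : ∀ w, (∑ j, F' w (Pi.single j 1) j) = laplacian f (φL w) := by
    intro w
    rw [← Equiv.sum_comp ee (fun j => F' w (Pi.single j 1) j)]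
    rw [Fintype.sum_sum_type]
    have hzero : ∀ k : Fin n, F' w (Pi.single (ee (Sum.inr k)) 1) (ee (Sum.inr k)) = 0 := by
      intro k
      rw [hF'def, ContinuousLinearMap.pi_apply]
      simp
    have hone : ∀ k : Fin n, F' w (Pi.single (ee (Sum.inl k)) 1) (ee (Sum.inl k))
        = fderiv ℝ (fun z => fderiv ℝ f z (EuclideanSpace.single k 1)) (φL w)
            (EuclideanSpace.single k 1) := by
      intro k
      rw [hF'def, ContinuousLinearMap.pi_apply]
      simp only [Equiv.symm_apply_apply, Sum.elim_inl, ContinuousLinearMap.comp_apply]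
      congr 1
      ext i
      rw [hφL]
      rw [EuclideanSpace.single_apply, Pi.single_apply, Pi.single_apply]
      by_cases hik : i = k
      · subst hik
        have h2 : ee (Sum.inr i) ≠ ee (Sum.inl i) := ee.injective.ne (by simp)
        simp [h2]
      · have h1 : ee (Sum.inl i) ≠ ee (Sum.inl k) := ee.injective.ne (by simp [hik])
        have h2 : ee (Sum.inr i) ≠ ee (Sum.inl k) := ee.injective.ne (by simp)
        simp [h1, h2, hik]
    rw [Finset.sum_congr rfl (fun k _ => hzero k), Finset.sum_congr rfl (fun k _ => hone k)]
    simp [laplacian]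
  -- continuity of V on the box
  have hVcont : ContinuousOn V (Set.Icc a b) := by
    rw [continuousOn_pi]
    intro j
    rcases hj : ee.symm j with k | k
    · have hVj : (fun w => V w j) = fun w => gradW k (φL w) := by
        funext w; rw [hVdef]; simp only [hj, Sum.elim_inl]
      rw [hVj]
      exact (hgradWcont k).comp φL.continuous.continuousOn hmapIcc
    · have hVj : (fun w => V w j) = fun _ => (0:ℝ) := by
        funext w; rw [hVdef]; simp only [hj, Sum.elim_inr]
      rw [hVj]; exact continuousOn_const
  -- differentiability of V on the open box
  have hO : IsOpen (Set.univ.pi fun j => Set.Ioo (a j) (b j)) :=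
    isOpen_set_pi Set.finite_univ fun _ _ => isOpen_Ioo
  have hVd : ∀ w ∈ (Set.univ.pi fun j => Set.Ioo (a j) (b j)), HasFDerivAt V (F' w) w := by
    intro w hw
    apply hasFDerivAt_pi'.2
    intro j
    rw [hF'def, ContinuousLinearMap.proj_pi]
    rcases hj : ee.symm j with k | k
    · simp only [hj, Sum.elim_inl]
      have hVj : (fun w' => V w' j) = fun w' => gradW k (φL w') := by
        funext w'; rw [hVdef]; simp only [hj, Sum.elim_inl]
      rw [hVj]
      have hzint : φL w ∈ interior S :=
        hmapInt j w (fun j' => Set.mem_Icc_of_Ioo (hw j' (Set.mem_univ j')))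
          (fun j' _ => hw j' (Set.mem_univ j'))
      have hev : (fun w' => gradW k (φL w'))
          =ᶠ[nhds w] fun w' => fderiv ℝ f (φL w') (EuclideanSpace.single k 1) := by
        filter_upwards [hO.mem_nhds hw] with w' hw'
        exact hgrad_int k (φL w')
          (hmapInt j w' (fun j' => Set.mem_Icc_of_Ioo (hw' j' (Set.mem_univ j')))
            (fun j' _ => hw' j' (Set.mem_univ j')))
      have hCAt : ContDiffAt ℝ 2 f (φL w) := hf.contDiffAt (mem_interior_iff_mem_nhds.1 hzint)
      have hd1 : ContDiffAt ℝ 1 (fderiv ℝ f) (φL w) := hCAt.fderiv_right (by norm_num)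
      have hdk : DifferentiableAt ℝ (fun z => fderiv ℝ f z (EuclideanSpace.single k 1)) (φL w) :=
        (hd1.differentiableAt one_ne_zero).clm_apply (differentiableAt_const _)
      have hcomp : HasFDerivAt (fun w' => fderiv ℝ f (φL w') (EuclideanSpace.single k 1))
          ((fderiv ℝ (fun z => fderiv ℝ f z (EuclideanSpace.single k 1)) (φL w)).comp φL) w :=
        (hdk.hasFDerivAt).comp w (φL.hasFDerivAt)
      exact hcomp.congr_of_eventuallyEq hev
    · simp only [hj, Sum.elim_inr]
      have hVj : (fun w' => V w' j) = fun _ => (0:ℝ) := by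
        funext w'; rw [hVdef]; simp only [hj, Sum.elim_inr]
      rw [hVj]
      exact hasFDerivAt_const 0 w
  -- the within-set laplacian, its continuity and bound
  set lapW : EuclideanSpace ℝ (Fin n) → ℝ :=
    fun z => ∑ k, fderivWithin ℝ (gradW k) S z (EuclideanSpace.single k 1) with hlapWdef
  have hlapWcont : ContinuousOn lapW S := by
    rw [hlapWdef]
    refine continuousOn_finset_sum _ fun k _ => ?_
    have hCk : ContDiffOn ℝ 1 (gradW k) S := hfd1.clm_apply contDiffOn_const
    exact (hCk.continuousOn_fderivWithin hUD le_rfl).clm_apply continuousOn_const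
  obtain ⟨M, hM⟩ : ∃ M, ∀ z ∈ S, ‖lapW z‖ ≤ M := hScomp.exists_bound_of_continuousOn hlapWcont
  have hlapeq : ∀ z ∈ interior S, laplacian f z = lapW z := by
    intro z hz
    rw [laplacian, hlapWdef]
    refine Finset.sum_congr rfl fun k _ => ?_
    have hev : gradW k =ᶠ[nhds z] (fun z' => fderiv ℝ f z' (EuclideanSpace.single k 1)) := by
      filter_upwards [isOpen_interior.mem_nhds hz] with z' hz'
      exact hgrad_int k z' hz'
    have h1 : fderivWithin ℝ (gradW k) S z = fderiv ℝ (gradW k) z :=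
      fderivWithin_of_mem_nhds (mem_interior_iff_mem_nhds.1 hz)
    have h2 : fderiv ℝ (gradW k) z
        = fderiv ℝ (fun z' => fderiv ℝ f z' (EuclideanSpace.single k 1)) z := hev.fderiv_eq
    rw [h1, h2]
  have hlap_meas : Measurable (laplacian f) := by
    have : laplacian f = fun z => ∑ k,
        fderiv ℝ (fun w => fderiv ℝ f w (EuclideanSpace.single k 1)) z
          (EuclideanSpace.single k 1) := rfl
    rw [this]
    exact Finset.measurable_sum _ fun k _ => measurable_fderiv_apply_const ℝ _ _
  -- integrability of the divergence
  have hIccfin : volume (Set.Icc a b) < ⊤ := by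
    rw [Real.volume_Icc_pi]
    exact ENNReal.prod_lt_top fun j _ => ENNReal.ofReal_lt_top
  have haeIoo : ∀ᵐ w ∂(volume.restrict (Set.Icc a b)),
      w ∈ Set.univ.pi fun j => Set.Ioo (a j) (b j) := by
    have hae : (Set.univ.pi fun j => Set.Ioo (a j) (b j)) =ᵐ[volume] Set.Icc a b := by
      rw [volume_pi]
      exact MeasureTheory.Measure.univ_pi_Ioo_ae_eq_Icc
    rw [← Measure.restrict_congr_set hae]
    exact ae_restrict_mem (MeasurableSet.univ_pi fun j => measurableSet_Ioo)
  have hfun : (fun w => ∑ j, F' w (Pi.single j 1) j) = fun w => laplacian f (φL w) :=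
    funext hdiv
  have hj0 : (⟨0, by omega⟩ : Fin (N + 1)) = ⟨0, by omega⟩ := rfl
  have Hi : IntegrableOn (fun w => ∑ j, F' w (Pi.single j 1) j) (Set.Icc a b) volume := by
    rw [hfun]
    refine Integrable.mono' (g := fun _ => M) (integrableOn_const hIccfin.ne)
      ((hlap_meas.comp φL.continuous.measurable).aestronglyMeasurable) ?_
    filter_upwards [haeIoo] with w hw
    have hmem : φL w ∈ interior S :=
      hmapInt ⟨0, by omega⟩ w (fun j => Set.mem_Icc_of_Ioo (hw j (Set.mem_univ j)))
        (fun j _ => hw j (Set.mem_univ j))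
    rw [Real.norm_eq_abs, hlapeq _ hmem, ← Real.norm_eq_abs]
    exact hM _ (interior_subset hmem)
  -- divergence theorem
  have hdivthm := integral_divergence_of_hasFDerivAt_off_countable a b hab V F' ∅
    Set.countable_empty hVcont (fun w hw => hVd w hw.1) Hi
  have hcore : (∫ w in Set.Icc a b, laplacian f (φL w)) = ∑ i : Fin (N + 1),
      ((∫ x' in Set.Icc (a ∘ i.succAbove) (b ∘ i.succAbove), V (i.insertNth (b i) x') i) -
        ∫ x' in Set.Icc (a ∘ i.succAbove) (b ∘ i.succAbove), V (i.insertNth (a i) x') i) := by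
    rw [← hfun]
    exact hdivthm
  -- face volumes
  have hABface : ∀ i : Fin (N + 1), (a ∘ i.succAbove) ≤ (b ∘ i.succAbove) := fun i m => hab _
  have hfacefin : ∀ i : Fin (N + 1),
      volume (Set.Icc (a ∘ i.succAbove) (b ∘ i.succAbove)) < ⊤ := by
    intro i
    rw [Real.volume_Icc_pi]
    exact ENNReal.prod_lt_top fun j _ => ENNReal.ofReal_lt_top
  have hall : ∏ j, (b j - a j) = (2*r₁)^n * (2*r₂)^n := by
    rw [← Equiv.prod_comp ee (fun j => b j - a j), Fintype.prod_sum_type]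
    have e1 : ∀ t : Fin n, b (ee (Sum.inl t)) - a (ee (Sum.inl t)) = 2*r₁ := fun t => by
      rw [ha_inl, hb_inl]; ring
    have e2 : ∀ t : Fin n, b (ee (Sum.inr t)) - a (ee (Sum.inr t)) = 2*r₂ := fun t => by
      rw [ha_inr, hb_inr]; ring
    rw [Finset.prod_congr rfl (fun t _ => e1 t), Finset.prod_congr rfl (fun t _ => e2 t)]
    simp
  have hfacevol : ∀ k : Fin n,
      (volume (Set.Icc (a ∘ (ee (Sum.inl k)).succAbove) (b ∘ (ee (Sum.inl k)).succAbove))).toReal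
      = (2*r₁)^n * (2*r₂)^n / (2*r₁) := by
    intro k
    rw [Real.volume_Icc_pi_toReal (hABface _)]
    have hprod := Fin.prod_univ_succAbove (fun j => b j - a j) (ee (Sum.inl k))
    rw [hall, hb_inl, ha_inl] at hprod
    have h2r : x k + r₁ - (x k - r₁) = 2*r₁ := by ring
    rw [h2r] at hprod
    have h2r0 : (2*r₁) ≠ 0 := by positivity
    simp only [Function.comp_apply]
    rw [eq_div_iff h2r0, mul_comm]
    exact hprod.symm
  -- a.e. membership for face points
  have haefacemem : ∀ (i : Fin (N + 1)),
      ∀ᵐ x' ∂(volume.restrict (Set.Icc (a ∘ i.succAbove) (b ∘ i.succAbove))),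
        x' ∈ Set.univ.pi fun m => Set.Ioo ((a ∘ i.succAbove) m) ((b ∘ i.succAbove) m) := by
    intro i
    have hae : (Set.univ.pi fun m => Set.Ioo ((a ∘ i.succAbove) m) ((b ∘ i.succAbove) m))
        =ᵐ[volume] Set.Icc (a ∘ i.succAbove) (b ∘ i.succAbove) := by
      rw [volume_pi]
      exact MeasureTheory.Measure.univ_pi_Ioo_ae_eq_Icc
    rw [← Measure.restrict_congr_set hae]
    exact ae_restrict_mem (MeasurableSet.univ_pi fun m => measurableSet_Ioo)
  -- bound on a face integral
  have hface : ∀ (k : Fin n) (c₀ : ℝ),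
      c₀ ∈ Set.Icc (a (ee (Sum.inl k))) (b (ee (Sum.inl k))) →
      ‖∫ x' in Set.Icc (a ∘ (ee (Sum.inl k)).succAbove) (b ∘ (ee (Sum.inl k)).succAbove),
        V ((ee (Sum.inl k)).insertNth c₀ x') (ee (Sum.inl k))‖
      ≤ L * ((2*r₁)^n * (2*r₂)^n / (2*r₁)) := by
    intro k c₀ hc₀
    rw [← hfacevol k]
    refine norm_setIntegral_le_of_norm_le_const_ae (hfacefin _) ?_
    filter_upwards [haefacemem (ee (Sum.inl k))] with x' hx'
    have hmem : φL ((ee (Sum.inl k)).insertNth c₀ x') ∈ interior S := by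
      apply hmapInt (ee (Sum.inl k))
      · intro j
        rcases eq_or_ne j (ee (Sum.inl k)) with rfl | hne
        · rw [Fin.insertNth_apply_same]; exact hc₀
        · obtain ⟨m, rfl⟩ := Fin.exists_succAbove_eq hne
          rw [Fin.insertNth_apply_succAbove]
          exact Set.mem_Icc_of_Ioo (hx' m (Set.mem_univ m))
      · intro j hne
        obtain ⟨m, rfl⟩ := Fin.exists_succAbove_eq hne
        rw [Fin.insertNth_apply_succAbove]
        exact hx' m (Set.mem_univ m)
    have hVval : V ((ee (Sum.inl k)).insertNth c₀ x') (ee (Sum.inl k))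
        = gradW k (φL ((ee (Sum.inl k)).insertNth c₀ x')) := by
      rw [hVdef]; simp
    rw [hVval, Real.norm_eq_abs]
    exact hgradW_bound k _ hmem
  -- sum over the faces
  have hsumbound : (∑ i : Fin (N + 1),
      ((∫ x' in Set.Icc (a ∘ i.succAbove) (b ∘ i.succAbove), V (i.insertNth (b i) x') i) -
        ∫ x' in Set.Icc (a ∘ i.succAbove) (b ∘ i.succAbove), V (i.insertNth (a i) x') i))
      ≤ n * (2 * L * ((2*r₁)^n * (2*r₂)^n / (2*r₁))) := by
    refine le_trans (le_of_eq (Equiv.sum_comp ee _).symm) ?_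
    rw [Fintype.sum_sum_type]
    have hzero : ∀ k : Fin n,
        ((∫ x' in Set.Icc (a ∘ (ee (Sum.inr k)).succAbove) (b ∘ (ee (Sum.inr k)).succAbove),
            V ((ee (Sum.inr k)).insertNth (b (ee (Sum.inr k))) x') (ee (Sum.inr k))) -
          ∫ x' in Set.Icc (a ∘ (ee (Sum.inr k)).succAbove) (b ∘ (ee (Sum.inr k)).succAbove),
            V ((ee (Sum.inr k)).insertNth (a (ee (Sum.inr k))) x') (ee (Sum.inr k))) = 0 := by
      intro k
      have hV0 : ∀ w, V w (ee (Sum.inr k)) = 0 := by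
        intro w; rw [hVdef]; simp
      simp [hV0]
    rw [Finset.sum_congr rfl (fun k _ => hzero k), Finset.sum_const_zero, add_zero]
    have h1 : ∀ k : Fin n,
        ((∫ x' in Set.Icc (a ∘ (ee (Sum.inl k)).succAbove) (b ∘ (ee (Sum.inl k)).succAbove),
            V ((ee (Sum.inl k)).insertNth (b (ee (Sum.inl k))) x') (ee (Sum.inl k))) -
          ∫ x' in Set.Icc (a ∘ (ee (Sum.inl k)).succAbove) (b ∘ (ee (Sum.inl k)).succAbove),
            V ((ee (Sum.inl k)).insertNth (a (ee (Sum.inl k))) x') (ee (Sum.inl k)))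
        ≤ 2 * L * ((2*r₁)^n * (2*r₂)^n / (2*r₁)) := by
      intro k
      have hb' := hface k (b (ee (Sum.inl k))) (Set.right_mem_Icc.2 (hab _))
      have ha' := hface k (a (ee (Sum.inl k))) (Set.left_mem_Icc.2 (hab _))
      rw [Real.norm_eq_abs] at hb' ha'
      have hb'' := (abs_le.1 hb').2
      have ha'' := (abs_le.1 ha').1
      linarith
    refine le_trans (Finset.sum_le_sum fun k _ => h1 k) ?_
    rw [Finset.sum_const, Finset.card_univ, Fintype.card_fin, nsmul_eq_mul]
  -- assembling the chain of equalities
  have hchain : (∫ y in Binf x r₁, ∫ z in Binf y r₂, laplacian f z)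
      ≤ n * (2 * L * ((2*r₁)^n * (2*r₂)^n / (2*r₁))) := by
    have hIeq1 : (∫ y in Binf x r₁, ∫ z in Binf y r₂, laplacian f z)
        = ∫ y in Binf x r₁, ∫ u in Binf (0 : EuclideanSpace ℝ (Fin n)) r₂,
            laplacian f (y + u) :=
      integral_congr_ae (Filter.Eventually.of_forall fun y => htrans y)
    have hcomp : ((fun p : EuclideanSpace ℝ (Fin n) × EuclideanSpace ℝ (Fin n) =>
        laplacian f (p.1 + p.2)) ∘ Tm) = fun w => laplacian f (φL w) := by
      funext w
      show laplacian f ((Tm w).1 + (Tm w).2) = _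
      rw [hTφ]
    have hint : IntegrableOn (fun p : EuclideanSpace ℝ (Fin n) × EuclideanSpace ℝ (Fin n) =>
        laplacian f (p.1 + p.2))
        ((Binf x r₁) ×ˢ (Binf (0 : EuclideanSpace ℝ (Fin n)) r₂)) volume := by
      have h2 : IntegrableOn ((fun p : EuclideanSpace ℝ (Fin n) × EuclideanSpace ℝ (Fin n) =>
          laplacian f (p.1 + p.2)) ∘ Tm)
          (Tm ⁻¹' ((Binf x r₁) ×ˢ (Binf (0 : EuclideanSpace ℝ (Fin n)) r₂))) volume := by
        rw [hcomp, hpre]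
        exact hfun ▸ Hi
      exact (hTm.integrableOn_comp_preimage Tm.measurableEmbedding).1 h2
    have hIeq2 : (∫ y in Binf x r₁, ∫ u in Binf (0 : EuclideanSpace ℝ (Fin n)) r₂,
        laplacian f (y + u))
        = ∫ p in (Binf x r₁) ×ˢ (Binf (0 : EuclideanSpace ℝ (Fin n)) r₂),
            laplacian f (p.1 + p.2) := by
      rw [MeasureTheory.Measure.volume_eq_prod] at hint ⊢
      exact (setIntegral_prod _ hint).symm
    have hIeq3 : (∫ p in (Binf x r₁) ×ˢ (Binf (0 : EuclideanSpace ℝ (Fin n)) r₂),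
        laplacian f (p.1 + p.2)) = ∫ w in Set.Icc a b, laplacian f (φL w) := by
      have hpe := hTm.setIntegral_preimage_emb Tm.measurableEmbedding
        (fun p : EuclideanSpace ℝ (Fin n) × EuclideanSpace ℝ (Fin n) => laplacian f (p.1 + p.2))
        ((Binf x r₁) ×ˢ (Binf (0 : EuclideanSpace ℝ (Fin n)) r₂))
      rw [hpre] at hpe
      rw [← hpe]
      refine integral_congr_ae (Filter.Eventually.of_forall fun w => ?_)
      show laplacian f ((Tm w).1 + (Tm w).2) = laplacian f (φL w)
      rw [hTφ]
    rw [hIeq1, hIeq2, hIeq3, hcore]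
    exact hsumbound
  -- final arithmetic
  rw [MeasureTheory.integral_const_mul]
  have hfinal : ((2*r₁)^n)⁻¹ * (((2*r₂)^n)⁻¹ * (n * (2 * L * ((2*r₁)^n * (2*r₂)^n / (2*r₁)))))
      = n * L / r₁ := by
    have h1 : ((2:ℝ)*r₁)^n ≠ 0 := by positivity
    have h2 : ((2:ℝ)*r₂)^n ≠ 0 := by positivity
    have h3 : (2:ℝ)*r₁ ≠ 0 := by positivity
    field_simp
  calc ((2*r₁)^n)⁻¹ * (((2*r₂)^n)⁻¹ * ∫ y in Binf x r₁, ∫ z in Binf y r₂, laplacian f z)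
      ≤ ((2*r₁)^n)⁻¹ * (((2*r₂)^n)⁻¹ * (n * (2 * L * ((2*r₁)^n * (2*r₂)^n / (2*r₁))))) := by
        refine mul_le_mul_of_nonneg_left ?_ (by positivity)
        exact mul_le_mul_of_nonneg_left hchain (by positivity)
    _ = n * L / r₁ := hfinal
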